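/- Let N ≥ 2, let f_n > 0 for all n ∈ {1,…,N}, let η > 0, λ > 0, ρ > 0, and set H = Σ_{i=1}^N 1/f_i. Define q*_n = (N−1)·η/(λ·ρ·H) · (1 − (N−1)/(f_n·H)) for each n. Then Σ_{i=1}^N q*_i = (N−1)·η/(λ·ρ·H), and for every n the first-order condition η·(Σ_{i≠n} q*_i)/(Σ_{i=1}^N q*_i)² = λ·ρ/f_n holds. -/

import Mathlib

/-- the closed-form profile `q*_n = (N−1)·η/(λ·ρ·H)·(1 − (N−1)/(f_n·H))`
has total `(N−1)·η/(λ·ρ·H)` and satisfies every data owner's first-order condition. -/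
theorem data_owners_foc (N : ℕ) (hN : 2 ≤ N) (f : Fin N → ℝ) (hf : ∀ n, 0 < f n)
    (η lam ρ : ℝ) (hη : 0 < η) (hlam : 0 < lam) (hρ : 0 < ρ)
    (q : Fin N → ℝ)
    (hq : ∀ n, q n = ((N : ℝ) - 1) * η / (lam * ρ * ∑ i, 1 / f i) *
      (1 - ((N : ℝ) - 1) / (f n * ∑ i, 1 / f i))) :
    (∑ i, q i = ((N : ℝ) - 1) * η / (lam * ρ * ∑ i, 1 / f i)) ∧
    ∀ n, η * (∑ i ∈ Finset.univ.erase n, q i) / (∑ i, q i) ^ 2 = lam * ρ / f n := by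
  set H : ℝ := ∑ i, 1 / f i with hH
  have hHpos : 0 < H := by
    apply Finset.sum_pos
    · intro i _; exact one_div_pos.mpr (hf i)
    · exact Finset.univ_nonempty_iff.mpr ⟨⟨0, by omega⟩⟩
  set C : ℝ := ((N : ℝ) - 1) * η / (lam * ρ * H) with hC
  have hN1 : (0:ℝ) < (N:ℝ) - 1 := by
    have : (2:ℝ) ≤ (N:ℝ) := by exact_mod_cast hN
    linarith
  have hCpos : 0 < C := by
    apply div_pos (by positivity) (by positivity)
  have hsum : ∑ i, q i = C := by
    have : ∀ n, q n = C - C * ((N:ℝ) - 1) / H * (1 / f n) := by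
      intro n
      rw [hq n]
      have hfn := hf n
      field_simp
    rw [Finset.sum_congr rfl (fun n _ => this n)]
    rw [Finset.sum_sub_distrib, Finset.sum_const, Finset.card_univ, Fintype.card_fin, ← Finset.mul_sum, ← hH]
    have hHne : H ≠ 0 := ne_of_gt hHpos
    field_simp
    ring
  refine ⟨hsum, fun n => ?_⟩
  have hfn := hf n
  have herase : ∑ i ∈ Finset.univ.erase n, q i = C - q n := by
    rw [← hsum, Finset.sum_erase_eq_sub (Finset.mem_univ n)]
  rw [hsum, herase, hq n]
  have hHne : H ≠ 0 := ne_of_gt hHpos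
  have hCne : C ≠ 0 := ne_of_gt hCpos
  rw [hC]
  field_simp
  ring
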